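/- Let F : ℝ → ℝ, d ∈ ℕ, δ ≥ 0, and keys k_1 < k_2 < ⋯ < k_n. Let 0 = g_0 < g_1 < ⋯ < g_t = n be the greedy boundary sequence, meaning that for each i < t, g_{i+1} is the largest index m with g_i < m ≤ n such that E_d({k_{g_i+1}, …, k_m}) ≤ δ. Then for every δ-feasible segmentation 0 = b_0 < b_1 < ⋯ < b_h = n and every index ℓ ≤ min(t, h), the greedy boundaries dominate: g_ℓ ≥ b_ℓ. In other words, with the same number of intervals the greedy segmentation always covers at least as many keys as any δ-feasible segmentation. -/

import Mathlib

/-- Minimax polynomial fitting error of degree `d` for `F` on the key set `S`: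
`E_d(S) = inf over (a_0,…,a_d) ∈ ℝ^{d+1} of sup_{k ∈ S} |F k - Σ_j a_j k^j|`. -/
noncomputable def fitError (F : ℝ → ℝ) (d : ℕ) (S : Set ℝ) : ℝ :=
  ⨅ a : Fin (d + 1) → ℝ,
    sSup ((fun x => |F x - ∑ j : Fin (d + 1), a j * x ^ (j : ℕ)|) '' S)

lemma fitError_mono (F : ℝ → ℝ) (d : ℕ) {S T : Set ℝ} (hST : S ⊆ T)
    (hS : S.Nonempty) (hT : T.Finite) :
    fitError F d S ≤ fitError F d T := by
  unfold fitError
  apply ciInf_mono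
  · refine ⟨0, ?_⟩
    rintro x ⟨a, rfl⟩
    exact Real.sSup_nonneg (by rintro y ⟨z, _, rfl⟩; exact abs_nonneg _)
  · intro a
    exact csSup_le_csSup ((hT.image _).bddAbove) (hS.image _) (Set.image_mono (f := _) hST)

/-- With the same number of intervals, the greedy boundaries dominate
the boundaries of any δ-feasible segmentation: `g ℓ ≥ b ℓ` for all `ℓ ≤ min t h`. -/
theorem greedy_boundaries_dominate (F : ℝ → ℝ) (d : ℕ) (δ : ℝ) (hδ : 0 ≤ δ)
    (n : ℕ) (k : ℕ → ℝ)
    (hk : ∀ i j, 1 ≤ i → i < j → j ≤ n → k i < k j)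
    -- greedy boundary sequence 0 = g 0 < g 1 < ⋯ < g t = n
    (t : ℕ) (g : ℕ → ℕ) (hg0 : g 0 = 0) (hgt : g t = n)
    (hgreedy : ∀ i < t, g i < g (i + 1) ∧ g (i + 1) ≤ n ∧
      fitError F d (k '' Set.Icc (g i + 1) (g (i + 1))) ≤ δ ∧
      ∀ m, g i < m → m ≤ n →
        fitError F d (k '' Set.Icc (g i + 1) m) ≤ δ → m ≤ g (i + 1))
    -- arbitrary δ-feasible segmentation 0 = b 0 < b 1 < ⋯ < b h = n
    (h : ℕ) (b : ℕ → ℕ) (hb0 : b 0 = 0) (hbh : b h = n)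
    (hbmono : ∀ i < h, b i < b (i + 1))
    (hbn : ∀ i < h, b (i + 1) ≤ n)
    (hbfeas : ∀ i < h, fitError F d (k '' Set.Icc (b i + 1) (b (i + 1))) ≤ δ) :
    ∀ ℓ, ℓ ≤ t → ℓ ≤ h → b ℓ ≤ g ℓ := by
  intro ℓ
  induction ℓ with
  | zero => intro _ _; simp [hb0, hg0]
  | succ ℓ ih =>
    intro hℓt hℓh
    have hℓt' : ℓ < t := hℓt
    have hℓh' : ℓ < h := hℓh
    have ihb : b ℓ ≤ g ℓ := ih (le_of_lt hℓt') (le_of_lt hℓh')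
    obtain ⟨hg1, hg2, _, hmax⟩ := hgreedy ℓ hℓt'
    by_cases hc : b (ℓ + 1) ≤ g ℓ
    · exact le_trans hc (le_of_lt hg1)
    · push_neg at hc
      apply hmax _ hc (hbn ℓ hℓh')
      have hsub : Set.Icc (g ℓ + 1) (b (ℓ + 1)) ⊆ Set.Icc (b ℓ + 1) (b (ℓ + 1)) :=
        Set.Icc_subset_Icc (by omega) le_rfl
      have hne : (k '' Set.Icc (g ℓ + 1) (b (ℓ + 1))).Nonempty :=
        (Set.nonempty_Icc.mpr (by omega)).image _
      have hfin : (k '' Set.Icc (b ℓ + 1) (b (ℓ + 1))).Finite :=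
        (Set.finite_Icc _ _).image _
      exact le_trans (fitError_mono F d (Set.image_mono (f := _) hsub) hne hfin)
        (hbfeas ℓ hℓh')
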